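/- Let $n \geq 3$ be odd and $G = D_n$. Let $C$ be the $G$-lattice of rank $2n+1$ with $\mathbb{Z}$-basis $a_1, \ldots, a_{2n}, b_1$ and action: $x : a_1 \mapsto a_3 \mapsto \cdots \mapsto a_{2n-1} \mapsto a_1$, $a_2 \mapsto a_4 \mapsto \cdots \mapsto a_{2n} \mapsto a_2$, $b_1 \mapsto b_1$; $y : a_i \leftrightarrow a_{2n-i}$ for $1 \leq i \leq n-1$, $a_{2n} \mapsto a_{2n}$, $b_1 \mapsto \sum_{i=1}^{2n} a_i - b_1$. Then $C \oplus \mathbb{Z}$ (trivial action on $\mathbb{Z}$) is isomorphic as a $G$-lattice to $\mathbb{Z}[G/\langle xy\rangle] \oplus \mathbb{Z}[G/\langle x^2y\rangle] \oplus \mathbb{Z}[G/\langle x\rangle]$; in particular $C$ is stably permutation. -/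

import Mathlib

open DihedralGroup Finsupp

set_option linter.unusedSectionVars false

namespace Stmt11

variable (n : ℕ) [NeZero n] [NeZero (2*n)]

lemma natCast_val_self {m : ℕ} [NeZero m] (a : ZMod m) : ((a.val : ℕ) : ZMod m) = a :=
  ZMod.natCast_rightInverse a

def m2 (j : ZMod n) : ZMod (2*n) := ((2 * j.val : ℕ) : ZMod (2*n))

noncomputable def m1 (j : ZMod n) : ZMod (2*n) := m2 n j + 1

lemma m2_natCast (x : ℕ) : m2 n ((x : ZMod n)) = ((2*x : ℕ) : ZMod (2*n)) := by
  unfold m2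
  rw [ZMod.val_natCast]
  have h : (2*x : ℕ) = 2 * (x % n) + (2*n) * (x / n) := by
    rw [Nat.mul_assoc 2 n (x / n), ← Nat.mul_add, Nat.mod_add_div]
  have h2 : (((2*n) * (x / n) : ℕ) : ZMod (2*n)) = 0 := by
    rw [Nat.cast_mul, ZMod.natCast_self, zero_mul]
  rw [h, Nat.cast_add, h2, add_zero]

lemma m2_add (a b : ZMod n) : m2 n (a + b) = m2 n a + m2 n b := by
  conv_lhs => rw [← natCast_val_self a, ← natCast_val_self b, ← Nat.cast_add, m2_natCast]
  conv_rhs => rw [← natCast_val_self a, ← natCast_val_self b, m2_natCast, m2_natCast]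
  push_cast
  ring

lemma m2_zero : m2 n 0 = 0 := by
  unfold m2; rw [ZMod.val_zero]; simp

lemma m2_neg (a : ZMod n) : m2 n (-a) = - m2 n a := by
  have h := m2_add n (-a) a
  rw [neg_add_cancel, m2_zero] at h
  exact eq_neg_of_add_eq_zero_left h.symm

lemma m2_one (hn : 3 ≤ n) : m2 n 1 = 2 := by
  haveI : Fact (1 < n) := ⟨by omega⟩
  unfold m2
  rw [ZMod.val_one]
  norm_num

lemma m1_eq (j : ZMod n) : m1 n j = ((2*j.val+1 : ℕ) : ZMod (2*n)) := by
  unfold m1 m2; push_cast; ring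

lemma m2_val (j : ZMod n) : (m2 n j).val = 2 * j.val := by
  unfold m2
  exact ZMod.val_natCast_of_lt (by have := ZMod.val_lt j; omega)

lemma m1_val (j : ZMod n) : (m1 n j).val = 2 * j.val + 1 := by
  rw [m1_eq]
  exact ZMod.val_natCast_of_lt (by have := ZMod.val_lt j; omega)

lemma m1_succ (hn : 3 ≤ n) (j : ZMod n) : m1 n (j + 1) = m1 n j + 2 := by
  unfold m1; rw [m2_add, m2_one n hn]; ring

lemma m2_succ (hn : 3 ≤ n) (j : ZMod n) : m2 n (j + 1) = m2 n j + 2 := by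
  rw [m2_add, m2_one n hn]

lemma m1_refl (hn : 3 ≤ n) (j : ZMod n) : m1 n (-1 - j) = - m1 n j := by
  unfold m1
  have : (-1 - j : ZMod n) = (-1) + (-j) := by ring
  rw [this, m2_add, m2_neg, m2_neg, m2_one n hn]
  ring

lemma m2_refl (j : ZMod n) : m2 n (-j) = - m2 n j := m2_neg n j


section group

variable {n}

omit [NeZero n] [NeZero (2*n)]

lemma r_inv (i : ZMod n) : (r i)⁻¹ = r (-i) := rfl

lemma sr_inv (i : ZMod n) : (sr i)⁻¹ = sr i := by
  have h := sr_mul_self i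
  exact inv_eq_of_mul_eq_one_right h

lemma sr_zpow (a : ZMod n) : ∀ m : ℤ, (sr a)^m = 1 ∨ (sr a)^m = sr a := by
  intro m
  induction m using Int.induction_on with
  | zero => left; rw [zpow_zero]
  | succ k ih =>
      rcases ih with h | h
      · right; rw [zpow_add_one, h, one_mul]
      · left; rw [zpow_add_one, h, sr_mul_self]
  | pred k ih =>
      rcases ih with h | h
      · right; rw [zpow_sub_one, h, one_mul, sr_inv]
      · left; rw [zpow_sub_one, h, sr_inv, sr_mul_self]

lemma mem_zpowers_sr {a : ZMod n} {g : DihedralGroup n}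
    (h : g ∈ Subgroup.zpowers (sr a)) : g = 1 ∨ g = sr a := by
  obtain ⟨m, hm⟩ := Subgroup.mem_zpowers_iff.mp h
  rcases sr_zpow a m with h' | h'
  · left; rw [← hm, h']
  · right; rw [← hm, h']

lemma mem_zpowers_r1 {g : DihedralGroup n}
    (h : g ∈ Subgroup.zpowers (r (1 : ZMod n))) : ∃ i, g = r i := by
  obtain ⟨m, hm⟩ := Subgroup.mem_zpowers_iff.mp h
  rcases m with k | k
  · exact ⟨(k : ZMod n), by
      rw [← hm]
      simp only [Int.ofNat_eq_coe, zpow_natCast, r_one_pow]⟩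
  · refine ⟨-((k+1 : ℕ) : ZMod n), ?_⟩
    rw [← hm, zpow_negSucc, r_one_pow, r_inv]

variable (n) in
lemma hxy : (r 1 * sr 0 : DihedralGroup n) = sr (-1) := by
  rw [r_mul_sr, zero_sub]

variable (n) in
lemma hx2y : (r 1 ^ 2 * sr 0 : DihedralGroup n) = sr (-2) := by
  rw [sq, r_mul_r, r_mul_sr, zero_sub, one_add_one_eq_two]

omit [NeZero n] in
lemma dummy_true : True := trivial

end group

section group2

variable {n}

lemma r_mem_zpowers_r1 (i : ZMod n) : r i ∈ Subgroup.zpowers (r (1 : ZMod n)) :=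
  Subgroup.mem_zpowers_iff.mpr ⟨(i.val : ℤ), by rw [zpow_natCast, r_one_pow, natCast_val_self]⟩

end group2

section iotas

def iota1 : DihedralGroup n → ZMod n
  | r i => i
  | sr i => -1 - i

def iota2 : DihedralGroup n → ZMod n
  | r i => i + 1
  | sr i => -1 - i

def iota3 : DihedralGroup n → Bool
  | r _ => false
  | sr _ => true

lemma iota1_wd {a b : DihedralGroup n}
    (h : a⁻¹ * b ∈ Subgroup.zpowers (r 1 * sr 0)) : iota1 n a = iota1 n b := by
  rw [hxy] at h
  rcases mem_zpowers_sr h with h1 | h1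
  · obtain rfl := inv_mul_eq_one.mp h1
    rfl
  · have hb : b = a * sr (-1) := by
      rw [← h1, mul_inv_cancel_left]
    subst hb
    cases a with
    | r i => simp [iota1]; try ring
    | sr i => simp [iota1]

lemma iota2_wd {a b : DihedralGroup n}
    (h : a⁻¹ * b ∈ Subgroup.zpowers (r 1 ^ 2 * sr 0)) : iota2 n a = iota2 n b := by
  rw [hx2y] at h
  rcases mem_zpowers_sr h with h1 | h1
  · obtain rfl := inv_mul_eq_one.mp h1
    rfl
  · have hb : b = a * sr (-2) := by
      rw [← h1, mul_inv_cancel_left]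
    subst hb
    cases a with
    | r i => simp [iota2]; try ring
    | sr i => simp [iota2]; try ring

lemma iota3_wd {a b : DihedralGroup n}
    (h : a⁻¹ * b ∈ Subgroup.zpowers (r 1)) : iota3 n a = iota3 n b := by
  obtain ⟨i, hi⟩ := mem_zpowers_r1 h
  have hb : b = a * r i := by
    rw [← hi, mul_inv_cancel_left]
  subst hb
  cases a <;> rfl

end iotas

section idx

noncomputable def idx1 : (DihedralGroup n ⧸ Subgroup.zpowers (r 1 * sr 0)) → ZMod n :=
  fun c => Quotient.liftOn' c (iota1 n)
    (fun a b h => iota1_wd n (QuotientGroup.leftRel_apply.mp h))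

noncomputable def idx2 : (DihedralGroup n ⧸ Subgroup.zpowers (r 1 ^ 2 * sr 0)) → ZMod n :=
  fun c => Quotient.liftOn' c (iota2 n)
    (fun a b h => iota2_wd n (QuotientGroup.leftRel_apply.mp h))

noncomputable def idx3 : (DihedralGroup n ⧸ Subgroup.zpowers (r 1)) → Bool :=
  fun c => Quotient.liftOn' c (iota3 n)
    (fun a b h => iota3_wd n (QuotientGroup.leftRel_apply.mp h))

@[simp] lemma idx1_mk (g : DihedralGroup n) :
    idx1 n (QuotientGroup.mk g) = iota1 n g := rfl

@[simp] lemma idx2_mk (g : DihedralGroup n) :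
    idx2 n (QuotientGroup.mk g) = iota2 n g := rfl

@[simp] lemma idx3_mk (g : DihedralGroup n) :
    idx3 n (QuotientGroup.mk g) = iota3 n g := rfl

lemma idx1_smul_x (c : DihedralGroup n ⧸ Subgroup.zpowers (r 1 * sr 0)) :
    idx1 n ((r 1 : DihedralGroup n) • c) = idx1 n c + 1 := by
  refine QuotientGroup.induction_on c (fun g => ?_)
  rw [MulAction.Quotient.smul_mk, smul_eq_mul]
  cases g with
  | r i => rw [r_mul_r 1 i, idx1_mk, idx1_mk]; simp [iota1]; try ring
  | sr i => rw [r_mul_sr 1 i, idx1_mk, idx1_mk]; simp [iota1]; try ring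

lemma idx1_smul_y (c : DihedralGroup n ⧸ Subgroup.zpowers (r 1 * sr 0)) :
    idx1 n ((sr 0 : DihedralGroup n) • c) = -1 - idx1 n c := by
  refine QuotientGroup.induction_on c (fun g => ?_)
  rw [MulAction.Quotient.smul_mk, smul_eq_mul]
  cases g with
  | r i => rw [sr_mul_r 0 i, idx1_mk, idx1_mk]; simp [iota1]
  | sr i => rw [sr_mul_sr 0 i, idx1_mk, idx1_mk]; simp [iota1]; try ring

lemma idx2_smul_x (c : DihedralGroup n ⧸ Subgroup.zpowers (r 1 ^ 2 * sr 0)) :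
    idx2 n ((r 1 : DihedralGroup n) • c) = idx2 n c + 1 := by
  refine QuotientGroup.induction_on c (fun g => ?_)
  rw [MulAction.Quotient.smul_mk, smul_eq_mul]
  cases g with
  | r i => rw [r_mul_r 1 i, idx2_mk, idx2_mk]; simp [iota2]; try ring
  | sr i => rw [r_mul_sr 1 i, idx2_mk, idx2_mk]; simp [iota2]; try ring

lemma idx2_smul_y (c : DihedralGroup n ⧸ Subgroup.zpowers (r 1 ^ 2 * sr 0)) :
    idx2 n ((sr 0 : DihedralGroup n) • c) = - idx2 n c := by
  refine QuotientGroup.induction_on c (fun g => ?_)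
  rw [MulAction.Quotient.smul_mk, smul_eq_mul]
  cases g with
  | r i => rw [sr_mul_r 0 i, idx2_mk, idx2_mk]; simp [iota2]; try ring
  | sr i => rw [sr_mul_sr 0 i, idx2_mk, idx2_mk]; simp [iota2]; try ring

lemma idx3_smul_x (c : DihedralGroup n ⧸ Subgroup.zpowers (r 1)) :
    idx3 n ((r 1 : DihedralGroup n) • c) = idx3 n c := by
  refine QuotientGroup.induction_on c (fun g => ?_)
  cases g <;> rfl

lemma idx3_smul_y (c : DihedralGroup n ⧸ Subgroup.zpowers (r 1)) :
    idx3 n ((sr 0 : DihedralGroup n) • c) = ! idx3 n c := by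
  refine QuotientGroup.induction_on c (fun g => ?_)
  cases g <;> rfl

end idx

section equivs

lemma val_inj {m : ℕ} [NeZero m] {a b : ZMod m} (h : a.val = b.val) : a = b := by
  rw [← natCast_val_self a, ← natCast_val_self b, h]

noncomputable def k1 : ZMod n ≃ (DihedralGroup n ⧸ Subgroup.zpowers (r 1 * sr 0)) := by
  refine Equiv.ofBijective (fun j => QuotientGroup.mk (r j)) ⟨?_, ?_⟩
  · intro j j' h
    have hmem := QuotientGroup.eq.mp h
    rw [hxy] at hmem
    have hprod : (r j)⁻¹ * r j' = r (-j + j') := by rw [r_inv, r_mul_r]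
    rw [hprod] at hmem
    rcases mem_zpowers_sr hmem with h1 | h1
    · rw [one_def] at h1
      simp only [r.injEq] at h1
      exact (neg_add_eq_zero.mp h1)
    · simp at h1
  · intro c
    refine QuotientGroup.induction_on c (fun g => ?_)
    cases g with
    | r i => exact ⟨i, rfl⟩
    | sr i =>
        refine ⟨-1 - i, QuotientGroup.eq.mpr ?_⟩
        rw [hxy]
        have : (r (-1 - i))⁻¹ * sr i = sr (-1) := by
          rw [r_inv, r_mul_sr]; congr 1; ring
        rw [this]
        exact Subgroup.mem_zpowers _

noncomputable def k2 : ZMod n ≃ (DihedralGroup n ⧸ Subgroup.zpowers (r 1 ^ 2 * sr 0)) := by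
  refine Equiv.ofBijective (fun j => QuotientGroup.mk (r j)) ⟨?_, ?_⟩
  · intro j j' h
    have hmem := QuotientGroup.eq.mp h
    rw [hx2y] at hmem
    have hprod : (r j)⁻¹ * r j' = r (-j + j') := by rw [r_inv, r_mul_r]
    rw [hprod] at hmem
    rcases mem_zpowers_sr hmem with h1 | h1
    · rw [one_def] at h1
      simp only [r.injEq] at h1
      exact (neg_add_eq_zero.mp h1)
    · simp at h1
  · intro c
    refine QuotientGroup.induction_on c (fun g => ?_)
    cases g with
    | r i => exact ⟨i, rfl⟩
    | sr i =>
        refine ⟨-2 - i, QuotientGroup.eq.mpr ?_⟩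
        rw [hx2y]
        have : (r (-2 - i))⁻¹ * sr i = sr (-2) := by
          rw [r_inv, r_mul_sr]; congr 1; ring
        rw [this]
        exact Subgroup.mem_zpowers _

noncomputable def k3 : Bool ≃ (DihedralGroup n ⧸ Subgroup.zpowers (r (1 : ZMod n))) := by
  refine Equiv.ofBijective (fun b => QuotientGroup.mk (cond b (sr 0) (r 0))) ⟨?_, ?_⟩
  · intro b b' h
    cases b <;> cases b' <;> try rfl
    · exfalso
      have hmem := QuotientGroup.eq.mp h
      simp only [Bool.cond_false, Bool.cond_true] at hmem
      have : (r (0 : ZMod n))⁻¹ * sr 0 = sr 0 := by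
        rw [r_inv, neg_zero, r_mul_sr, sub_zero]
      rw [this] at hmem
      obtain ⟨i, hi⟩ := mem_zpowers_r1 hmem
      simp at hi
    · exfalso
      have hmem := QuotientGroup.eq.mp h
      simp only [Bool.cond_false, Bool.cond_true] at hmem
      have : (sr (0 : ZMod n))⁻¹ * r 0 = sr 0 := by
        rw [sr_inv, sr_mul_r, add_zero]
      rw [this] at hmem
      obtain ⟨i, hi⟩ := mem_zpowers_r1 hmem
      simp at hi
  · intro c
    refine QuotientGroup.induction_on c (fun g => ?_)
    cases g with
    | r i =>
        refine ⟨false, QuotientGroup.eq.mpr ?_⟩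
        simp only [Bool.cond_false, Bool.cond_true]
        have : (r (0 : ZMod n))⁻¹ * r i = r (0 + i) := by
          rw [r_inv, neg_zero, r_mul_r]
        rw [this, zero_add]
        exact r_mem_zpowers_r1 i
    | sr i =>
        refine ⟨true, QuotientGroup.eq.mpr ?_⟩
        simp only [Bool.cond_false, Bool.cond_true]
        have : (sr (0 : ZMod n))⁻¹ * sr i = r (i - 0) := by
          rw [sr_inv, sr_mul_sr]
        rw [this, sub_zero]
        exact r_mem_zpowers_r1 _

noncomputable def uSum : ZMod n ⊕ ZMod n → ZMod (2*n) := Sum.elim (m1 n) (m2 n)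

lemma m1_natCast (x : ℕ) : m1 n ((x : ZMod n)) = ((2*x+1 : ℕ) : ZMod (2*n)) := by
  unfold m1
  rw [m2_natCast]
  push_cast
  ring

lemma uSum_bij : Function.Bijective (uSum n) := by
  constructor
  · rintro (a | a) (b | b) h <;> simp only [uSum, Sum.elim_inl, Sum.elim_inr] at h <;>
      have hval := congrArg ZMod.val h
    · rw [m1_val, m1_val] at hval
      have : a.val = b.val := by omega
      rw [val_inj this]
    · rw [m1_val, m2_val] at hval
      exact absurd hval (by omega)
    · rw [m2_val, m1_val] at hval
      exact absurd hval (by omega)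
    · rw [m2_val, m2_val] at hval
      have : a.val = b.val := by omega
      rw [val_inj this]
  · intro i
    have hlt : i.val < 2*n := ZMod.val_lt i
    rcases Nat.even_or_odd i.val with ⟨m, hm⟩ | ⟨m, hm⟩
    · refine ⟨Sum.inr (m : ZMod n), ?_⟩
      have h2 : 2*m = i.val := by omega
      show m2 n _ = i
      rw [m2_natCast, h2, natCast_val_self]
    · refine ⟨Sum.inl (m : ZMod n), ?_⟩
      have h2 : 2*m+1 = i.val := by omega
      show m1 n _ = i
      rw [m1_natCast, h2, natCast_val_self]

lemma sum_split {M : Type*} [AddCommMonoid M] (f : ZMod (2*n) → M) :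
    ∑ i : ZMod (2*n), f i = (∑ j : ZMod n, f (m1 n j)) + ∑ j : ZMod n, f (m2 n j) := by
  have h1 : ∑ k : ZMod n ⊕ ZMod n, f (uSum n k) = ∑ i : ZMod (2*n), f i :=
    Fintype.sum_bijective (uSum n) (uSum_bij n) _ _ (fun k => rfl)
  rw [← h1, Fintype.sum_sum_type]
  rfl

end equivs

noncomputable section defs

def Sfun : (ZMod (2*n) ⊕ Unit) → ℤ := ∑ i : ZMod (2*n), Pi.single (Sum.inl i) 1

def Av (i : ZMod (2*n)) : ((ZMod (2*n) ⊕ Unit) → ℤ) × ℤ := (Pi.single (Sum.inl i) 1, 0)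

def Bv : ((ZMod (2*n) ⊕ Unit) → ℤ) × ℤ := (Pi.single (Sum.inr ()) 1, 0)

def Tv : ((ZMod (2*n) ⊕ Unit) → ℤ) × ℤ := (0, 1)

def qz : ℤ := (n+1)/2

def vec1 (c : DihedralGroup n ⧸ Subgroup.zpowers (r 1 * sr 0)) :
    ((ZMod (2*n) ⊕ Unit) → ℤ) × ℤ :=
  (Pi.single (Sum.inl (m1 n (idx1 n c))) 1, 1)

def vec2 (c : DihedralGroup n ⧸ Subgroup.zpowers (r 1 ^ 2 * sr 0)) :
    ((ZMod (2*n) ⊕ Unit) → ℤ) × ℤ :=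
  (Pi.single (Sum.inl (m2 n (idx2 n c))) 1, 0)

def vec3 (c : DihedralGroup n ⧸ Subgroup.zpowers (r (1 : ZMod n))) :
    ((ZMod (2*n) ⊕ Unit) → ℤ) × ℤ :=
  if idx3 n c then (Sfun n - Pi.single (Sum.inr ()) 1, qz n) else (Pi.single (Sum.inr ()) 1, qz n)

def psi : (((DihedralGroup n ⧸ Subgroup.zpowers (r 1 * sr 0)) →₀ ℤ) ×
    ((DihedralGroup n ⧸ Subgroup.zpowers (r 1 ^ 2 * sr 0)) →₀ ℤ) ×
    ((DihedralGroup n ⧸ Subgroup.zpowers (r (1 : ZMod n))) →₀ ℤ)) →ₗ[ℤ]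
    ((ZMod (2*n) ⊕ Unit) → ℤ) × ℤ :=
  (Finsupp.linearCombination ℤ (vec1 n)).coprod
    ((Finsupp.linearCombination ℤ (vec2 n)).coprod (Finsupp.linearCombination ℤ (vec3 n)))

@[simp] lemma psi_single1 (c) : psi n (Finsupp.single c 1, 0) = vec1 n c := by
  unfold psi
  rw [LinearMap.coprod_apply, map_zero, add_zero, Finsupp.linearCombination_single, one_smul]

@[simp] lemma psi_single2 (c) : psi n (0, Finsupp.single c 1, 0) = vec2 n c := by
  unfold psi
  rw [LinearMap.coprod_apply, LinearMap.coprod_apply]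
  simp only [map_zero, add_zero, zero_add]
  rw [Finsupp.linearCombination_single, one_smul]

@[simp] lemma psi_single3 (c) : psi n (0, 0, Finsupp.single c 1) = vec3 n c := by
  unfold psi
  rw [LinearMap.coprod_apply, LinearMap.coprod_apply]
  simp only [map_zero, add_zero, zero_add]
  rw [Finsupp.linearCombination_single, one_smul]

end defs

section surj

open QuotientGroup

lemma vec1_mk_r (j : ZMod n) :
    vec1 n (QuotientGroup.mk (r j)) = (Pi.single (Sum.inl (m1 n j)) 1, 1) := rfl

lemma vec2_mk_r (j : ZMod n) :
    vec2 n (QuotientGroup.mk (r j)) = (Pi.single (Sum.inl (m2 n (j+1))) 1, 0) := rfl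

lemma vec3_mk_r (j : ZMod n) :
    vec3 n (QuotientGroup.mk (r j)) = (Pi.single (Sum.inr ()) 1, qz n) := rfl

lemma vec3_mk_sr (j : ZMod n) :
    vec3 n (QuotientGroup.mk (sr j)) = (Sfun n - Pi.single (Sum.inr ()) 1, qz n) := rfl

lemma hq_eq (hodd : Odd n) : 2 * qz n = (n : ℤ) + 1 := by
  unfold qz
  obtain ⟨k, hk⟩ := hodd
  subst hk
  push_cast
  omega

lemma psi_surj (hodd : Odd n) : Function.Surjective (psi n) := by
  have hq := hq_eq n hodd
  set P := LinearMap.range (psi n) with hP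
  have h1 : ∀ c, vec1 n c ∈ P := fun c => ⟨(Finsupp.single c 1, 0), psi_single1 n c⟩
  have h2 : ∀ c, vec2 n c ∈ P := fun c => ⟨(0, Finsupp.single c 1, 0), psi_single2 n c⟩
  have h3 : ∀ c, vec3 n c ∈ P := fun c => ⟨(0, 0, Finsupp.single c 1), psi_single3 n c⟩
  have hsum2 : ∑ j : ZMod n, (Pi.single (Sum.inl (m2 n (j+1))) 1 : (ZMod (2*n) ⊕ Unit) → ℤ)
      = ∑ j : ZMod n, Pi.single (Sum.inl (m2 n j)) 1 :=
    Fintype.sum_equiv (Equiv.addRight 1) _ _ (fun j => rfl)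
  have hsplit : Sfun n = (∑ j : ZMod n, (Pi.single (Sum.inl (m1 n j)) 1 : (ZMod (2*n) ⊕ Unit) → ℤ))
      + ∑ j : ZMod n, Pi.single (Sum.inl (m2 n j)) 1 :=
    sum_split n (fun i => Pi.single (Sum.inl i) 1)
  have hTeq : Tv n = vec3 n (QuotientGroup.mk (r 0)) + vec3 n (QuotientGroup.mk (sr 0))
      - (∑ j : ZMod n, vec1 n (QuotientGroup.mk (r j)))
      - ∑ j : ZMod n, vec2 n (QuotientGroup.mk (r j)) := by
    simp_rw [vec1_mk_r, vec2_mk_r, vec3_mk_r, vec3_mk_sr]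
    refine Prod.ext ?_ ?_
    · simp only [Tv, Prod.fst_sub, Prod.fst_add, Prod.fst_sum]
      rw [hsum2, hsplit]
      abel
    · simp only [Tv, Prod.snd_sub, Prod.snd_add, Prod.snd_sum]
      rw [Finset.sum_const, Finset.sum_const]
      simp only [Finset.card_univ, ZMod.card, nsmul_eq_mul, mul_one, mul_zero]
      omega
  have hT : Tv n ∈ P := by
    rw [hTeq]
    refine sub_mem (sub_mem (add_mem (h3 _) (h3 _)) (Submodule.sum_mem _ fun j _ => h1 _))
      (Submodule.sum_mem _ fun j _ => h2 _)
  have hB : Bv n ∈ P := by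
    have hBeq : Bv n = vec3 n (QuotientGroup.mk (r 0)) - qz n • Tv n := by
      rw [vec3_mk_r]
      refine Prod.ext ?_ ?_
      · simp [Bv, Tv]
      · simp [Bv, Tv]
    rw [hBeq]
    exact sub_mem (h3 _) (Submodule.smul_mem _ _ hT)
  have hA : ∀ i : ZMod (2*n), Av n i ∈ P := by
    intro i
    have hlt : i.val < 2*n := ZMod.val_lt i
    rcases Nat.even_or_odd i.val with ⟨m, hm⟩ | ⟨m, hm⟩
    · have hieq : m2 n (((m : ZMod n) - 1) + 1) = i := by
        rw [sub_add_cancel, m2_natCast]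
        have h2 : 2*m = i.val := by omega
        rw [h2, natCast_val_self]
      have : Av n i = vec2 n (QuotientGroup.mk (r ((m : ZMod n) - 1))) := by
        rw [vec2_mk_r, hieq]
        rfl
      rw [this]
      exact h2 _
    · have hieq : m1 n ((m : ZMod n)) = i := by
        rw [m1_natCast]
        have h2 : 2*m+1 = i.val := by omega
        rw [h2, natCast_val_self]
      have : Av n i = vec1 n (QuotientGroup.mk (r (m : ZMod n))) - Tv n := by
        rw [vec1_mk_r, hieq]
        refine Prod.ext ?_ ?_
        · simp [Av, Tv]
        · simp [Av, Tv]
      rw [this]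
      exact sub_mem (h1 _) hT
  have hsingle : ∀ k : ZMod (2*n) ⊕ Unit, ((Pi.single k 1, (0:ℤ)) :
      ((ZMod (2*n) ⊕ Unit) → ℤ) × ℤ) ∈ P := by
    rintro (i | ⟨⟩)
    · exact hA i
    · exact hB
  intro v
  rw [← LinearMap.mem_range]
  have hexp : v = (∑ k : ZMod (2*n) ⊕ Unit, v.1 k • ((Pi.single k 1, (0:ℤ)) :
      ((ZMod (2*n) ⊕ Unit) → ℤ) × ℤ)) + v.2 • Tv n := by
    refine Prod.ext ?_ ?_
    · simp only [Prod.fst_add, Prod.fst_sum, Prod.smul_mk, Tv, smul_zero, add_zero]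
      conv_lhs => rw [← Finset.univ_sum_single v.1]
      refine Finset.sum_congr rfl (fun k _ => ?_)
      rw [← Pi.single_smul, smul_eq_mul, mul_one]
    · simp only [Prod.snd_add, Prod.snd_sum, Prod.smul_mk, Tv, smul_zero, smul_eq_mul,
        mul_one, mul_zero, Finset.sum_const_zero, zero_add]
  rw [hexp]
  exact add_mem (Submodule.sum_mem _ fun k _ => Submodule.smul_mem _ _ (hsingle k))
    (Submodule.smul_mem _ _ hT)

end surj

section inter

noncomputable def repF (X : Type*) [MulAction (DihedralGroup n) X] (g : DihedralGroup n) :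
    (X →₀ ℤ) →ₗ[ℤ] (X →₀ ℤ) :=
  (MonoidAlgebra.coeffLinearEquiv ℤ).toLinearMap ∘ₗ Representation.ofMulAction ℤ _ X g ∘ₗ
    (MonoidAlgebra.coeffLinearEquiv ℤ).symm.toLinearMap

@[simp] lemma repF_single (X : Type*) [MulAction (DihedralGroup n) X] (g : DihedralGroup n)
    (x : X) : repF n X g (Finsupp.single x 1) = Finsupp.single (g • x) 1 := by
  simp [repF, Representation.ofMulAction_def]

@[simp] lemma repF_one (X : Type*) [MulAction (DihedralGroup n) X] (w : X →₀ ℤ) :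
    repF n X 1 w = w := by
  simp [repF]

@[simp] lemma repF_mul (X : Type*) [MulAction (DihedralGroup n) X] (a b : DihedralGroup n)
    (w : X →₀ ℤ) : repF n X (a * b) w = repF n X a (repF n X b w) := by
  simp [repF, map_mul, Module.End.mul_apply]

noncomputable def rhoW (g : DihedralGroup n) :
    (((DihedralGroup n ⧸ Subgroup.zpowers (r 1 * sr 0)) →₀ ℤ) ×
     ((DihedralGroup n ⧸ Subgroup.zpowers (r 1 ^ 2 * sr 0)) →₀ ℤ) ×
     ((DihedralGroup n ⧸ Subgroup.zpowers (r (1 : ZMod n))) →₀ ℤ)) →ₗ[ℤ]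
    (((DihedralGroup n ⧸ Subgroup.zpowers (r 1 * sr 0)) →₀ ℤ) ×
     ((DihedralGroup n ⧸ Subgroup.zpowers (r 1 ^ 2 * sr 0)) →₀ ℤ) ×
     ((DihedralGroup n ⧸ Subgroup.zpowers (r (1 : ZMod n))) →₀ ℤ)) :=
  (repF n (DihedralGroup n ⧸ Subgroup.zpowers (r 1 * sr 0)) g).prodMap
    ((repF n (DihedralGroup n ⧸ Subgroup.zpowers (r 1 ^ 2 * sr 0)) g).prodMap
     (repF n (DihedralGroup n ⧸ Subgroup.zpowers (r (1 : ZMod n))) g))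

lemma rhoW_mul_apply (a b : DihedralGroup n) (w) :
    rhoW n (a * b) w = rhoW n a (rhoW n b w) := by
  simp only [rhoW, LinearMap.prodMap_apply, repF_mul]

variable {n}

section withrep

variable (ρC : Representation ℤ (DihedralGroup n) ((ZMod (2 * n) ⊕ Unit) → ℤ))

lemma hSx (hxa : ∀ i : ZMod (2 * n), ρC (DihedralGroup.r 1) (Pi.single (Sum.inl i) 1) =
      Pi.single (Sum.inl (i + 2)) 1) : ρC (r 1) (Sfun n) = Sfun n := by
  unfold Sfun
  rw [map_sum]
  simp_rw [hxa]
  exact Fintype.sum_equiv (Equiv.addRight (2 : ZMod (2*n))) _ _ (fun i => rfl)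

lemma hSy (hya : ∀ i : ZMod (2 * n), ρC (DihedralGroup.sr 0) (Pi.single (Sum.inl i) 1) =
      Pi.single (Sum.inl (-i)) 1) : ρC (sr 0) (Sfun n) = Sfun n := by
  unfold Sfun
  rw [map_sum]
  simp_rw [hya]
  exact Fintype.sum_equiv (Equiv.neg (ZMod (2*n))) _ _ (fun i => rfl)

variable (hn : 3 ≤ n)
variable (hxa : ∀ i : ZMod (2 * n), ρC (DihedralGroup.r 1) (Pi.single (Sum.inl i) 1) =
      Pi.single (Sum.inl (i + 2)) 1)
    (hxb : ρC (DihedralGroup.r 1) (Pi.single (Sum.inr ()) 1) = Pi.single (Sum.inr ()) 1)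
    (hya : ∀ i : ZMod (2 * n), ρC (DihedralGroup.sr 0) (Pi.single (Sum.inl i) 1) =
      Pi.single (Sum.inl (-i)) 1)
    (hyb : ρC (DihedralGroup.sr 0) (Pi.single (Sum.inr ()) 1) =
      (∑ i : ZMod (2 * n), Pi.single (Sum.inl i) 1) - Pi.single (Sum.inr ()) 1)

include hn hxa hxb hya hyb

lemma keyx1 (c) : psi n (rhoW n (r 1) (Finsupp.single c 1, 0))
    = ((ρC (r 1)).prodMap LinearMap.id) (psi n (Finsupp.single c 1, 0)) := by
  have h0 : rhoW n (r 1) (Finsupp.single c 1, 0)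
      = (Finsupp.single ((r 1 : DihedralGroup n) • c) 1, 0) := by
    simp only [rhoW, LinearMap.prodMap_apply, repF_single, map_zero, Prod.fst_zero, Prod.snd_zero]
  rw [h0, psi_single1, psi_single1]
  unfold vec1
  rw [idx1_smul_x, m1_succ n hn]
  refine Prod.ext ?_ ?_
  · simp [LinearMap.prodMap_apply, hxa]
  · rfl

lemma keyy1 (c) : psi n (rhoW n (sr 0) (Finsupp.single c 1, 0))
    = ((ρC (sr 0)).prodMap LinearMap.id) (psi n (Finsupp.single c 1, 0)) := by
  have h0 : rhoW n (sr 0) (Finsupp.single c 1, 0)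
      = (Finsupp.single ((sr 0 : DihedralGroup n) • c) 1, 0) := by
    simp only [rhoW, LinearMap.prodMap_apply, repF_single, map_zero, Prod.fst_zero, Prod.snd_zero]
  rw [h0, psi_single1, psi_single1]
  unfold vec1
  rw [idx1_smul_y, m1_refl n hn]
  refine Prod.ext ?_ ?_
  · simp [LinearMap.prodMap_apply, hya]
  · rfl

lemma keyx2 (c) : psi n (rhoW n (r 1) (0, Finsupp.single c 1, 0))
    = ((ρC (r 1)).prodMap LinearMap.id) (psi n (0, Finsupp.single c 1, 0)) := by
  have h0 : rhoW n (r 1) (0, Finsupp.single c 1, 0)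
      = (0, Finsupp.single ((r 1 : DihedralGroup n) • c) 1, 0) := by
    simp only [rhoW, LinearMap.prodMap_apply, repF_single, map_zero, Prod.fst_zero, Prod.snd_zero]
  rw [h0, psi_single2, psi_single2]
  unfold vec2
  rw [idx2_smul_x, m2_succ n hn]
  refine Prod.ext ?_ ?_
  · simp [LinearMap.prodMap_apply, hxa]
  · rfl

lemma keyy2 (c) : psi n (rhoW n (sr 0) (0, Finsupp.single c 1, 0))
    = ((ρC (sr 0)).prodMap LinearMap.id) (psi n (0, Finsupp.single c 1, 0)) := by
  have h0 : rhoW n (sr 0) (0, Finsupp.single c 1, 0)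
      = (0, Finsupp.single ((sr 0 : DihedralGroup n) • c) 1, 0) := by
    simp only [rhoW, LinearMap.prodMap_apply, repF_single, map_zero, Prod.fst_zero, Prod.snd_zero]
  rw [h0, psi_single2, psi_single2]
  unfold vec2
  rw [idx2_smul_y, m2_neg]
  refine Prod.ext ?_ ?_
  · simp [LinearMap.prodMap_apply, hya]
  · rfl

lemma keyx3 (c) : psi n (rhoW n (r 1) (0, 0, Finsupp.single c 1))
    = ((ρC (r 1)).prodMap LinearMap.id) (psi n (0, 0, Finsupp.single c 1)) := by
  have h0 : rhoW n (r 1) (0, 0, Finsupp.single c 1)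
      = (0, 0, Finsupp.single ((r 1 : DihedralGroup n) • c) 1) := by
    simp only [rhoW, LinearMap.prodMap_apply, repF_single, map_zero, Prod.fst_zero, Prod.snd_zero]
  rw [h0, psi_single3, psi_single3]
  unfold vec3
  rw [idx3_smul_x]
  rcases hb : idx3 n c with _ | _
  · refine Prod.ext ?_ ?_
    · simp [LinearMap.prodMap_apply, hxb]
    · rfl
  · refine Prod.ext ?_ ?_
    · simp [LinearMap.prodMap_apply, map_sub, hxb, hSx ρC hxa]
    · rfl

lemma keyy3 (c) : psi n (rhoW n (sr 0) (0, 0, Finsupp.single c 1))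
    = ((ρC (sr 0)).prodMap LinearMap.id) (psi n (0, 0, Finsupp.single c 1)) := by
  have h0 : rhoW n (sr 0) (0, 0, Finsupp.single c 1)
      = (0, 0, Finsupp.single ((sr 0 : DihedralGroup n) • c) 1) := by
    simp only [rhoW, LinearMap.prodMap_apply, repF_single, map_zero, Prod.fst_zero, Prod.snd_zero]
  rw [h0, psi_single3, psi_single3]
  unfold vec3
  rw [idx3_smul_y]
  rcases hb : idx3 n c with _ | _
  · refine Prod.ext ?_ ?_
    · unfold Sfun
      simp [LinearMap.prodMap_apply, hyb]
    · rfl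
  · refine Prod.ext ?_ ?_
    · have h1 := hSy ρC hya
      unfold Sfun at h1 ⊢
      simp [LinearMap.prodMap_apply, map_sub, hyb, h1]
    · rfl

lemma key_gen (g : DihedralGroup n) :
    (psi n).comp (rhoW n g) = ((ρC g).prodMap LinearMap.id).comp (psi n) := by
  have hmul : ∀ a b, (psi n).comp (rhoW n a) = ((ρC a).prodMap LinearMap.id).comp (psi n) →
      (psi n).comp (rhoW n b) = ((ρC b).prodMap LinearMap.id).comp (psi n) →
      (psi n).comp (rhoW n (a*b)) = ((ρC (a*b)).prodMap LinearMap.id).comp (psi n) := by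
    intro a b ha hb
    apply LinearMap.ext
    intro w
    have h1 : rhoW n (a*b) w = rhoW n a (rhoW n b w) := rhoW_mul_apply n a b w
    have h2 := DFunLike.congr_fun ha (rhoW n b w)
    have h3 := DFunLike.congr_fun hb w
    simp only [LinearMap.comp_apply] at h2 h3 ⊢
    rw [h1, h2, h3, map_mul]
    simp [LinearMap.prodMap_apply, Module.End.mul_apply]
  have hone : (psi n).comp (rhoW n 1) = ((ρC 1).prodMap LinearMap.id).comp (psi n) := by
    apply LinearMap.ext
    intro w
    simp only [rhoW, LinearMap.comp_apply, LinearMap.prodMap_apply, repF_one, map_one,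
      Module.End.one_apply, LinearMap.id_apply]
  have hx : (psi n).comp (rhoW n (r 1)) = ((ρC (r 1)).prodMap LinearMap.id).comp (psi n) := by
    ext c
    · exact congrFun (congrArg Prod.fst (keyx1 ρC hn hxa hxb hya hyb c)) _
    · have h := congrArg (Prod.snd) (keyx1 ρC hn hxa hxb hya hyb c)
      exact h
    · exact congrFun (congrArg Prod.fst (keyx2 ρC hn hxa hxb hya hyb c)) _
    · have h := congrArg (Prod.snd) (keyx2 ρC hn hxa hxb hya hyb c)
      exact h
    · exact congrFun (congrArg Prod.fst (keyx3 ρC hn hxa hxb hya hyb c)) _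
    · have h := congrArg (Prod.snd) (keyx3 ρC hn hxa hxb hya hyb c)
      exact h
  have hy : (psi n).comp (rhoW n (sr 0)) = ((ρC (sr 0)).prodMap LinearMap.id).comp (psi n) := by
    ext c
    · exact congrFun (congrArg Prod.fst (keyy1 ρC hn hxa hxb hya hyb c)) _
    · have h := congrArg (Prod.snd) (keyy1 ρC hn hxa hxb hya hyb c)
      exact h
    · exact congrFun (congrArg Prod.fst (keyy2 ρC hn hxa hxb hya hyb c)) _
    · have h := congrArg (Prod.snd) (keyy2 ρC hn hxa hxb hya hyb c)
      exact h
    · exact congrFun (congrArg Prod.fst (keyy3 ρC hn hxa hxb hya hyb c)) _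
    · have h := congrArg (Prod.snd) (keyy3 ρC hn hxa hxb hya hyb c)
      exact h
  have hr1pow : ∀ k : ℕ, (psi n).comp (rhoW n ((r 1 : DihedralGroup n)^k))
      = ((ρC ((r 1 : DihedralGroup n)^k)).prodMap LinearMap.id).comp (psi n) := by
    intro k
    induction k with
    | zero => simpa using hone
    | succ k ih =>
        have := hmul _ _ ih hx
        simpa [pow_succ] using this
  cases g with
  | r i =>
      have hri : (r i : DihedralGroup n) = (r 1 : DihedralGroup n) ^ (i.val) := by
        rw [r_one_pow, natCast_val_self]
      rw [hri]
      exact hr1pow i.val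
  | sr i =>
      have hsri : (sr i : DihedralGroup n) = sr 0 * r i := by
        rw [sr_mul_r, zero_add]
      have hri : (r i : DihedralGroup n) = (r 1 : DihedralGroup n) ^ (i.val) := by
        rw [r_one_pow, natCast_val_self]
      rw [hsri]
      exact hmul _ _ hy (by rw [hri]; exact hr1pow i.val)

end withrep


end inter

section final

noncomputable def idxEquiv :
    ((DihedralGroup n ⧸ Subgroup.zpowers (r 1 * sr 0)) ⊕
     (DihedralGroup n ⧸ Subgroup.zpowers (r 1 ^ 2 * sr 0)) ⊕
     (DihedralGroup n ⧸ Subgroup.zpowers (r (1 : ZMod n)))) ≃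
    ((ZMod (2*n) ⊕ Unit) ⊕ Unit) :=
  (Equiv.sumCongr (k1 n).symm (Equiv.sumCongr (k2 n).symm (k3 n).symm)).trans <|
    (Equiv.sumAssoc (ZMod n) (ZMod n) Bool).symm.trans <|
      (Equiv.sumCongr (Equiv.ofBijective (uSum n) (uSum_bij n))
        (Equiv.boolEquivPUnitSumPUnit : Bool ≃ (Unit ⊕ Unit))).trans
        (Equiv.sumAssoc (ZMod (2*n)) Unit Unit).symm

noncomputable def iotaWV :
    (((DihedralGroup n ⧸ Subgroup.zpowers (r 1 * sr 0)) →₀ ℤ) ×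
     ((DihedralGroup n ⧸ Subgroup.zpowers (r 1 ^ 2 * sr 0)) →₀ ℤ) ×
     ((DihedralGroup n ⧸ Subgroup.zpowers (r (1 : ZMod n))) →₀ ℤ)) ≃ₗ[ℤ]
    ((ZMod (2*n) ⊕ Unit) → ℤ) × ℤ :=
  ((Finsupp.linearEquivFunOnFinite ℤ ℤ _).prodCongr
      ((Finsupp.linearEquivFunOnFinite ℤ ℤ _).prodCongr
        (Finsupp.linearEquivFunOnFinite ℤ ℤ _))).trans <|
    ((LinearEquiv.refl ℤ _).prodCongr
        (LinearEquiv.sumArrowLequivProdArrow _ _ ℤ ℤ).symm).trans <|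
      (LinearEquiv.sumArrowLequivProdArrow _ _ ℤ ℤ).symm.trans <|
        (LinearEquiv.funCongrLeft ℤ ℤ (idxEquiv n).symm).trans <|
          (LinearEquiv.sumArrowLequivProdArrow _ _ ℤ ℤ).trans
            ((LinearEquiv.refl ℤ _).prodCongr (LinearEquiv.funUnique Unit ℤ ℤ))

lemma psi_inj (hodd : Odd n) : Function.Injective (psi n) :=
  OrzechProperty.injective_of_surjective_of_injective
    (iotaWV n).toLinearMap (psi n) (iotaWV n).injective (psi_surj n hodd)

end final

end Stmt11

/-- For `n ≥ 3` odd and `G = D_n`, the rank-`(2n+1)` `G`-lattice `C`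
(basis `a_i (i mod 2n), b₁`, `x : a_i ↦ a_{i+2}`, `b₁ ↦ b₁`, `y : a_i ↦ a_{-i}`,
`b₁ ↦ Σ a_i - b₁`) satisfies
`C ⊕ ℤ ≅ ℤ[G/⟨xy⟩] ⊕ ℤ[G/⟨x²y⟩] ⊕ ℤ[G/⟨x⟩]`; in particular `C` is stably
permutation.  Here `x = r 1`, `y = sr 0`. -/
theorem stmt_11 (n : ℕ) [NeZero (2 * n)] (hn : 3 ≤ n) (hodd : Odd n)
    (ρC : Representation ℤ (DihedralGroup n) ((ZMod (2 * n) ⊕ Unit) → ℤ))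
    (hxa : ∀ i : ZMod (2 * n), ρC (DihedralGroup.r 1) (Pi.single (Sum.inl i) 1) =
      Pi.single (Sum.inl (i + 2)) 1)
    (hxb : ρC (DihedralGroup.r 1) (Pi.single (Sum.inr ()) 1) = Pi.single (Sum.inr ()) 1)
    (hya : ∀ i : ZMod (2 * n), ρC (DihedralGroup.sr 0) (Pi.single (Sum.inl i) 1) =
      Pi.single (Sum.inl (-i)) 1)
    (hyb : ρC (DihedralGroup.sr 0) (Pi.single (Sum.inr ()) 1) =
      (∑ i : ZMod (2 * n), Pi.single (Sum.inl i) 1) - Pi.single (Sum.inr ()) 1) :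
    ∃ e : (((ZMod (2 * n) ⊕ Unit) → ℤ) × ℤ) ≃ₗ[ℤ]
      (((DihedralGroup n ⧸
          Subgroup.zpowers (DihedralGroup.r 1 * DihedralGroup.sr 0)) →₀ ℤ) ×
        ((DihedralGroup n ⧸
          Subgroup.zpowers (DihedralGroup.r 1 ^ 2 * DihedralGroup.sr 0)) →₀ ℤ) ×
        ((DihedralGroup n ⧸ Subgroup.zpowers (DihedralGroup.r 1)) →₀ ℤ)),
      ∀ (g : DihedralGroup n) (v : ((ZMod (2 * n) ⊕ Unit) → ℤ) × ℤ),
        e (ρC g v.1, v.2) =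
          ((Representation.ofMulAction ℤ (DihedralGroup n)
            (DihedralGroup n ⧸
              Subgroup.zpowers (DihedralGroup.r 1 * DihedralGroup.sr 0)) g
              (MonoidAlgebra.ofCoeff (e v).1)).coeff,
           (Representation.ofMulAction ℤ (DihedralGroup n)
            (DihedralGroup n ⧸
              Subgroup.zpowers (DihedralGroup.r 1 ^ 2 * DihedralGroup.sr 0)) g
              (MonoidAlgebra.ofCoeff (e v).2.1)).coeff,
           (Representation.ofMulAction ℤ (DihedralGroup n)
            (DihedralGroup n ⧸ Subgroup.zpowers (DihedralGroup.r 1)) g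
              (MonoidAlgebra.ofCoeff (e v).2.2)).coeff) := by
  haveI : NeZero n := ⟨by omega⟩
  have hbij : Function.Bijective (Stmt11.psi n) :=
    ⟨Stmt11.psi_inj n hodd, Stmt11.psi_surj n hodd⟩
  let E := LinearEquiv.ofBijective (Stmt11.psi n) hbij
  refine ⟨E.symm, ?_⟩
  intro g v
  have hEcoe : ∀ x, E x = Stmt11.psi n x := fun x => rfl
  have hEs : ∀ x, E.symm (Stmt11.psi n x) = x := fun x => by
    rw [← hEcoe]; exact E.symm_apply_apply x
  have hkey := DFunLike.congr_fun (Stmt11.key_gen ρC hn hxa hxb hya hyb g) (E.symm v)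
  simp only [LinearMap.comp_apply] at hkey
  have hv : Stmt11.psi n (E.symm v) = v := by
    rw [← hEcoe]; exact E.apply_symm_apply v
  rw [hv] at hkey
  have h2 : E.symm ((ρC g) v.1, v.2) = Stmt11.rhoW n g (E.symm v) := by
    have h3 : ((ρC g) v.1, v.2) = Stmt11.psi n (Stmt11.rhoW n g (E.symm v)) := by
      rw [hkey]; rfl
    rw [h3, hEs]
  rw [h2]
  rfl
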